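/- arXiv:1909.10206 — 8 statements merged into one kernel-verified Lean document; each statement's English description precedes it below -/
import Mathlib

section
/- Let (a,b) be a unimodular (N,Z)-CZCP with a_0 = b_0 = 1. Then a_i = b_i and a_{N-1-i} = -b_{N-1-i} for all i ∈ {0,1,...,Z-1}. -/
open Finset

/-- Aperiodic cross-correlation of length-`N` complex sequences at shift `τ`. -/
noncomputable def rho (N : ℕ) (a b : ℕ → ℂ) (τ : ℕ) : ℂ :=
  ∑ n ∈ Finset.range (N - τ), a n * (starRingEnd ℂ) (b (n + τ))

/-- For a unimodular (N,Z)-CZCP (a,b) with a_0 = b_0 = 1, we have a_i = b_i and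
a_{N-1-i} = -b_{N-1-i} for all i ∈ {0,...,Z-1}. -/
theorem stmt5 (N Z : ℕ) (hN : 1 ≤ N) (a b : ℕ → ℂ)
    (ha : ∀ n < N, ‖a n‖ = 1) (hb : ∀ n < N, ‖b n‖ = 1)
    (ha0 : a 0 = 1) (hb0 : b 0 = 1)
    (hC1 : ∀ τ, (1 ≤ τ ∧ τ ≤ Z) ∨ (N - Z ≤ τ ∧ τ ≤ N - 1) →
      rho N a a τ + rho N b b τ = 0)
    (hC2 : ∀ τ, N - Z ≤ τ → τ ≤ N - 1 → rho N a b τ + rho N b a τ = 0) :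
    ∀ i < Z, a i = b i ∧ a (N - 1 - i) = -b (N - 1 - i) := by
  by_cases hZN : N ≤ Z
  · exfalso
    have h0 := hC1 0 (Or.inr ⟨by omega, by omega⟩)
    have hra : rho N a a 0 = (N : ℂ) := by
      rw [rho, Nat.sub_zero]
      have : ∀ n ∈ Finset.range N, a n * (starRingEnd ℂ) (a (n + 0)) = 1 := by
        intro n hn
        rw [Finset.mem_range] at hn
        have h := ha n hn
        rw [add_zero, Complex.mul_conj, Complex.normSq_eq_norm_sq, h]
        norm_num
      rw [Finset.sum_congr rfl this]
      simp
    have hrb : rho N b b 0 = (N : ℂ) := by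
      rw [rho, Nat.sub_zero]
      have : ∀ n ∈ Finset.range N, b n * (starRingEnd ℂ) (b (n + 0)) = 1 := by
        intro n hn
        rw [Finset.mem_range] at hn
        have h := hb n hn
        rw [add_zero, Complex.mul_conj, Complex.normSq_eq_norm_sq, h]
        norm_num
      rw [Finset.sum_congr rfl this]
      simp
    rw [hra, hrb] at h0
    have hN0 : (N : ℂ) = 0 := by linear_combination h0 / 2
    exact absurd (Nat.cast_eq_zero.mp hN0) (by omega)
  · push_neg at hZN
    intro i
    induction i using Nat.strong_induction_on with
    | _ i IH =>
      intro hiZ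
      have hiN : i < N - 1 ∨ (i = 0 ∧ N = 1) := by omega
      have hiN' : i < N := by omega
      have e1 := hC1 (N - 1 - i) (Or.inr ⟨by omega, by omega⟩)
      have e2 := hC2 (N - 1 - i) (by omega) (by omega)
      have hNτ : N - (N - 1 - i) = i + 1 := by omega
      rw [rho, rho, hNτ, ← Finset.sum_add_distrib] at e1
      rw [rho, rho, hNτ, ← Finset.sum_add_distrib] at e2
      rcases Nat.eq_zero_or_pos i with rfl | hpos
      · rw [Finset.sum_range_one] at e1 e2
        have hτ0 : (0 : ℕ) + (N - 1 - 0) = N - 1 := by omega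
        rw [hτ0, ha0, hb0, one_mul, one_mul] at e2
        refine ⟨by rw [ha0, hb0], ?_⟩
        have h4 : (starRingEnd ℂ) (a (N - 1) + b (N - 1)) = 0 := by
          rw [map_add]; linear_combination e2
        have h5 : a (N - 1) + b (N - 1) = 0 := by
          have := congrArg (starRingEnd ℂ) h4
          simpa using this
        simpa using eq_neg_of_add_eq_zero_left h5
      · obtain ⟨m, rfl⟩ : ∃ m, i = m + 1 := ⟨i - 1, by omega⟩
        have hNm : a (N - 1) = -b (N - 1) := by
          simpa using (IH 0 (by omega) (by omega)).2
        have hA : (starRingEnd ℂ) (a (N - 1)) = -(starRingEnd ℂ) (b (N - 1)) := by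
          rw [hNm, map_neg]
        rw [Finset.sum_range_succ] at e1 e2
        rw [Finset.sum_range_succ'] at e1 e2
        have hmid1 : ∀ n ∈ Finset.range m,
            a (n + 1) * (starRingEnd ℂ) (a (n + 1 + (N - 1 - (m + 1)))) +
              b (n + 1) * (starRingEnd ℂ) (b (n + 1 + (N - 1 - (m + 1)))) = 0 := by
          intro n hn
          rw [Finset.mem_range] at hn
          have h1 := (IH (n + 1) (by omega) (by omega)).1
          have h2 := (IH (m - n) (by omega) (by omega)).2
          have hidx : n + 1 + (N - 1 - (m + 1)) = N - 1 - (m - n) := by omega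
          rw [hidx, h1, h2, map_neg]
          ring
        have hmid2 : ∀ n ∈ Finset.range m,
            a (n + 1) * (starRingEnd ℂ) (b (n + 1 + (N - 1 - (m + 1)))) +
              b (n + 1) * (starRingEnd ℂ) (a (n + 1 + (N - 1 - (m + 1)))) = 0 := by
          intro n hn
          rw [Finset.mem_range] at hn
          have h1 := (IH (n + 1) (by omega) (by omega)).1
          have h2 := (IH (m - n) (by omega) (by omega)).2
          have hidx : n + 1 + (N - 1 - (m + 1)) = N - 1 - (m - n) := by omega
          rw [hidx, h1, h2, map_neg]
          ring
        rw [Finset.sum_eq_zero hmid1, zero_add] at e1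
        rw [Finset.sum_eq_zero hmid2, zero_add] at e2
        have hτ0 : (0 : ℕ) + (N - 1 - (m + 1)) = N - 1 - (m + 1) := by omega
        have hτm : m + 1 + (N - 1 - (m + 1)) = N - 1 := by omega
        rw [hτ0, hτm, ha0, hb0, one_mul, one_mul] at e1 e2
        have hBne : (starRingEnd ℂ) (b (N - 1)) ≠ 0 := by
          intro h
          have hb1 := hb (N - 1) (by omega)
          have : b (N - 1) = 0 := by
            have := congrArg (starRingEnd ℂ) h
            simpa using this
          rw [this] at hb1
          simp at hb1
        have h3 : (a (m + 1) - b (m + 1)) * (2 * (starRingEnd ℂ) (b (N - 1))) = 0 := by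
          linear_combination e2 - e1 + (a (m + 1) - b (m + 1)) * hA
        have hab : a (m + 1) = b (m + 1) := by
          rcases mul_eq_zero.mp h3 with h | h
          · exact sub_eq_zero.mp h
          · exact absurd h (by simpa using hBne)
        refine ⟨hab, ?_⟩
        have h4 : (starRingEnd ℂ) (a (N - 1 - (m + 1)) + b (N - 1 - (m + 1))) = 0 := by
          rw [map_add]
          linear_combination e2 - (starRingEnd ℂ) (b (N - 1)) * hab - b (m + 1) * hA
        have h5 : a (N - 1 - (m + 1)) + b (N - 1 - (m + 1)) = 0 := by
          have := congrArg (starRingEnd ℂ) h4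
          simpa using this
        exact eq_neg_of_add_eq_zero_left h5
end

section
/- Every unimodular (N,Z)-CZCP satisfies Z ≤ N/2. In particular, if (a,b) is an (N,Z)-CZCP with unimodular entries, then 2Z ≤ N. -/
open Finset

lemma rho_add (N : ℕ) (a b : ℕ → ℂ) (τ : ℕ) :
    ∑ n ∈ Finset.range (N - τ), (a n + b n) * (starRingEnd ℂ) (a (n + τ) + b (n + τ))
      = (rho N a a τ + rho N b b τ) + (rho N a b τ + rho N b a τ) := by
  simp only [rho, ← Finset.sum_add_distrib]
  exact Finset.sum_congr rfl fun n _ => by simp only [map_add]; ring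

lemma rho_sub (N : ℕ) (a b : ℕ → ℂ) (τ : ℕ) :
    ∑ n ∈ Finset.range (N - τ), (a n - b n) * (starRingEnd ℂ) (a (n + τ) - b (n + τ))
      = (rho N a a τ + rho N b b τ) - (rho N a b τ + rho N b a τ) := by
  simp only [rho]
  rw [← Finset.sum_add_distrib, ← Finset.sum_add_distrib, ← Finset.sum_sub_distrib]
  exact Finset.sum_congr rfl fun n _ => by simp only [map_sub]; ring

lemma aux6 (N Z : ℕ) (hZ : 1 ≤ Z) (hZN : Z + 1 ≤ N) (h2Z : N + 1 ≤ 2 * Z)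
    (a b : ℕ → ℂ)
    (ha : ∀ n < N, ‖a n‖ = 1)
    (hC1 : ∀ τ, (1 ≤ τ ∧ τ ≤ Z) ∨ (N - Z ≤ τ ∧ τ ≤ N - 1) →
      rho N a a τ + rho N b b τ = 0)
    (hC2 : ∀ τ, N - Z ≤ τ → τ ≤ N - 1 → rho N a b τ + rho N b a τ = 0)
    (hu0 : a 0 + b 0 = 0) : False := by
  have hane : ∀ n < N, a n ≠ 0 := by
    intro n hn h
    have := ha n hn
    rw [h] at this
    simp at this
  have hEu : ∀ k < Z, ∑ n ∈ Finset.range (k + 1),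
      (a n + b n) * (starRingEnd ℂ) (a (n + (N - 1 - k)) + b (n + (N - 1 - k))) = 0 := by
    intro k hk
    have h1 : N - (N - 1 - k) = k + 1 := by omega
    have h2 := rho_add N a b (N - 1 - k)
    rw [h1] at h2
    rw [h2, hC1 _ (Or.inr ⟨by omega, by omega⟩), hC2 _ (by omega) (by omega)]
    ring
  have hEv : ∀ k < Z, ∑ n ∈ Finset.range (k + 1),
      (a n - b n) * (starRingEnd ℂ) (a (n + (N - 1 - k)) - b (n + (N - 1 - k))) = 0 := by
    intro k hk
    have h1 : N - (N - 1 - k) = k + 1 := by omega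
    have h2 := rho_sub N a b (N - 1 - k)
    rw [h1] at h2
    rw [h2, hC1 _ (Or.inr ⟨by omega, by omega⟩), hC2 _ (by omega) (by omega)]
    ring
  have main : ∀ k, k < Z → (a k + b k = 0) ∧ (a (N - 1 - k) - b (N - 1 - k) = 0) := by
    intro k
    induction k using Nat.strong_induction_on with
    | _ k IH =>
      intro hk
      have huk : a k + b k = 0 := by
        rcases Nat.eq_zero_or_pos k with rfl | hkpos
        · exact hu0
        · have hE := hEu k hk
          rw [Finset.sum_range_succ, Finset.sum_eq_zero (fun n hn => by
            rw [(IH n (Finset.mem_range.mp hn)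
              (lt_trans (Finset.mem_range.mp hn) hk)).1, zero_mul]), zero_add] at hE
          have hNk : k + (N - 1 - k) = N - 1 := by omega
          rw [hNk] at hE
          have hv := (IH 0 hkpos (by omega)).2
          simp only [Nat.sub_zero] at hv
          have hune : a (N - 1) + b (N - 1) ≠ 0 := by
            intro h
            apply hane (N - 1) (by omega)
            linear_combination (h + hv) / 2
          rcases mul_eq_zero.mp hE with h | h
          · exact h
          · rw [starRingEnd_apply, star_eq_zero] at h
            exact absurd h hune
      refine ⟨huk, ?_⟩
      have hE := hEv k hk
      rw [Finset.sum_range_succ', Finset.sum_eq_zero (fun n hn => by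
        have hn' := Finset.mem_range.mp hn
        have hidx : (n + 1) + (N - 1 - k) = N - 1 - (k - 1 - n) := by omega
        rw [hidx, (IH (k - 1 - n) (by omega) (by omega)).2, map_zero, mul_zero]),
        zero_add, zero_add] at hE
      have hv0 : a 0 - b 0 ≠ 0 := by
        intro h
        apply hane 0 (by omega)
        linear_combination (h + hu0) / 2
      rcases mul_eq_zero.mp hE with h | h
      · exact absurd h hv0
      · rw [starRingEnd_apply, star_eq_zero] at h
        exact h
  have h1 := (main (Z - 1) (by omega)).2
  have h2 := (main (N - Z) (by omega)).1
  have hidx : N - 1 - (Z - 1) = N - Z := by omega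
  rw [hidx] at h1
  exact hane (N - Z) (by omega) (by linear_combination (h1 + h2) / 2)

/-- Every unimodular (N,Z)-CZCP satisfies 2Z ≤ N. -/
theorem stmt6 (N Z : ℕ) (hN : 1 ≤ N) (a b : ℕ → ℂ)
    (ha : ∀ n < N, ‖a n‖ = 1) (hb : ∀ n < N, ‖b n‖ = 1)
    (hC1 : ∀ τ, (1 ≤ τ ∧ τ ≤ Z) ∨ (N - Z ≤ τ ∧ τ ≤ N - 1) →
      rho N a a τ + rho N b b τ = 0)
    (hC2 : ∀ τ, N - Z ≤ τ → τ ≤ N - 1 → rho N a b τ + rho N b a τ = 0) :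
    2 * Z ≤ N := by
  by_contra hcon
  push_neg at hcon
  have h2Z : N + 1 ≤ 2 * Z := hcon
  have hane : ∀ n < N, a n ≠ 0 := by
    intro n hn h
    have := ha n hn
    rw [h] at this
    simp at this
  rcases le_or_gt N Z with hZge | hZlt
  · -- Z ≥ N : shift 0 is in the tail range, contradiction with positivity
    have h0 := hC1 0 (Or.inr ⟨by omega, by omega⟩)
    have haa : rho N a a 0 = (N : ℂ) := by
      simp only [rho, Nat.sub_zero, Nat.add_zero]
      rw [Finset.sum_congr rfl (fun n hn => ?_), Finset.sum_const, Finset.card_range,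
        nsmul_eq_mul, mul_one]
      rw [Complex.mul_conj, ← Complex.sq_norm, ha n (Finset.mem_range.mp hn)]
      norm_num
    have hbb : rho N b b 0 = (N : ℂ) := by
      simp only [rho, Nat.sub_zero, Nat.add_zero]
      rw [Finset.sum_congr rfl (fun n hn => ?_), Finset.sum_const, Finset.card_range,
        nsmul_eq_mul, mul_one]
      rw [Complex.mul_conj, ← Complex.sq_norm, hb n (Finset.mem_range.mp hn)]
      norm_num
    rw [haa, hbb] at h0
    have : ((2 * N : ℕ) : ℂ) = 0 := by push_cast; linear_combination h0
    have := Nat.cast_eq_zero.mp this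
    omega
  · have hZN : Z + 1 ≤ N := hZlt
    have hZ1 : 1 ≤ Z := by omega
    have h1 : N - (N - 1) = 1 := by omega
    have hA := rho_add N a b (N - 1)
    have hB := rho_sub N a b (N - 1)
    rw [h1, Finset.sum_range_one] at hA hB
    have hC1' := hC1 (N - 1) (Or.inr ⟨by omega, le_refl _⟩)
    have hC2' := hC2 (N - 1) (by omega) (le_refl _)
    rw [hC1', hC2'] at hA hB
    simp only [zero_add, add_zero, sub_zero] at hA hB
    rcases mul_eq_zero.mp hA with hu0 | huN
    · exact aux6 N Z hZ1 hZN h2Z a b ha hC1 hC2 hu0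
    · rw [starRingEnd_apply, star_eq_zero] at huN
      have hvN : a (N - 1) - b (N - 1) ≠ 0 := by
        intro h
        apply hane (N - 1) (by omega)
        linear_combination (h + huN) / 2
      rcases mul_eq_zero.mp hB with hv0 | h
      · -- apply aux6 to (a, -b)
        have rnn : ∀ τ, rho N (fun n => -b n) (fun n => -b n) τ = rho N b b τ := by
          intro τ
          exact Finset.sum_congr rfl fun n _ => by simp
        have ran : ∀ τ, rho N a (fun n => -b n) τ = -rho N a b τ := by
          intro τ
          simp only [rho, ← Finset.sum_neg_distrib]
          exact Finset.sum_congr rfl fun n _ => by simp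
        have rna : ∀ τ, rho N (fun n => -b n) a τ = -rho N b a τ := by
          intro τ
          simp only [rho, ← Finset.sum_neg_distrib]
          exact Finset.sum_congr rfl fun n _ => by simp
        refine aux6 N Z hZ1 hZN h2Z a (fun n => -b n) ha ?_ ?_ ?_
        · intro τ hτ
          rw [rnn]
          exact hC1 τ hτ
        · intro τ hτ1 hτ2
          rw [ran, rna]
          linear_combination -hC2 τ hτ1 hτ2
        · show a 0 + -b 0 = 0
          linear_combination hv0
      · rw [starRingEnd_apply, star_eq_zero] at h
        exact hvN h
end

section
/- A binary (N,Z)-CZCP over {-1,+1} with Z ≥ 1 must have even length N. -/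
open Finset

/-- Aperiodic cross-correlation of length-`N` real sequences at shift `τ`. -/
noncomputable def rhoR (N : ℕ) (a b : ℕ → ℝ) (τ : ℕ) : ℝ :=
  ∑ n ∈ Finset.range (N - τ), a n * b (n + τ)

lemma sum_prod_sign (m : ℕ) (x : ℕ → ℝ) (hx : ∀ n < m, x n = 1 ∨ x n = -1) :
    ∃ k : ℕ, (∑ n ∈ range m, x n) = (m : ℝ) - 2 * k ∧
      (∏ n ∈ range m, x n) = (-1 : ℝ) ^ k := by
  induction m with
  | zero => exact ⟨0, by simp⟩
  | succ m ih =>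
    obtain ⟨k, hs, hp⟩ := ih (fun n hn => hx n (hn.trans (Nat.lt_succ_self m)))
    rcases hx m (Nat.lt_succ_self m) with h1 | h1
    · refine ⟨k, ?_, ?_⟩
      · rw [Finset.sum_range_succ, hs, h1]; push_cast; ring
      · rw [Finset.prod_range_succ, hp, h1, mul_one]
    · refine ⟨k + 1, ?_, ?_⟩
      · rw [Finset.sum_range_succ, hs, h1]; push_cast; ring
      · rw [Finset.prod_range_succ, hp, h1, pow_succ]

lemma telescope (m : ℕ) (a : ℕ → ℝ) (ha : ∀ n ≤ m, a n = 1 ∨ a n = -1) :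
    ∏ n ∈ range m, (a n * a (n + 1)) = a 0 * a m := by
  induction m with
  | zero =>
    simp only [range_zero, prod_empty]
    rcases ha 0 le_rfl with h | h <;> rw [h] <;> norm_num
  | succ m ih =>
    rw [Finset.prod_range_succ, ih (fun n hn => ha n (hn.trans (Nat.le_succ m)))]
    have h2 : a m * a m = 1 := by
      rcases ha m (Nat.le_succ m) with h | h <;> rw [h] <;> norm_num
    calc a 0 * a m * (a m * a (m + 1)) = a 0 * (a m * a m) * a (m + 1) := by ring
      _ = a 0 * a (m + 1) := by rw [h2, mul_one]

/-- A binary (N,Z)-CZCP over {-1,+1} with Z ≥ 1 must have even length N. -/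
theorem stmt7 (N Z : ℕ) (hZ : 1 ≤ Z) (a b : ℕ → ℝ)
    (ha : ∀ n < N, a n = 1 ∨ a n = -1) (hb : ∀ n < N, b n = 1 ∨ b n = -1)
    (hC1 : ∀ τ, (1 ≤ τ ∧ τ ≤ Z) ∨ (N - Z ≤ τ ∧ τ ≤ N - 1) →
      rhoR N a a τ + rhoR N b b τ = 0)
    (hC2 : ∀ τ, N - Z ≤ τ → τ ≤ N - 1 → rhoR N a b τ + rhoR N b a τ = 0) :
    Even N := by
  rcases Nat.eq_zero_or_pos N with h0 | hN1
  · simp [h0]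
  rcases eq_or_lt_of_le (show 1 ≤ N by omega) with h1 | hN2
  · -- N = 1 : contradiction from hC2 at τ = 0
    exfalso
    have h := hC2 0 (by omega) (by omega)
    rw [← h1] at h
    simp only [rhoR, Nat.sub_zero, range_one, sum_singleton, Nat.add_zero] at h
    have hab : a 0 * b 0 = 1 ∨ a 0 * b 0 = -1 := by
      rcases ha 0 (by omega) with h' | h' <;> rcases hb 0 (by omega) with h'' | h'' <;>
        rw [h', h''] <;> norm_num
    have : a 0 * b 0 + b 0 * a 0 = 0 := h
    rcases hab with he | he <;> nlinarith [he]
  -- N ≥ 2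
  have hN : 2 ≤ N := hN2
  -- τ = 1 condition
  have e1 := hC1 1 (Or.inl ⟨le_rfl, hZ⟩)
  -- τ = N - 1 condition
  have e2 := hC1 (N - 1) (Or.inr ⟨by omega, le_rfl⟩)
  obtain ⟨ka, hsa, hpa⟩ := sum_prod_sign (N - 1) (fun n => a n * a (n + 1))
    (fun n hn => by
      rcases ha n (by omega) with h' | h' <;> rcases ha (n + 1) (by omega) with h'' | h'' <;>
        simp [h', h''])
  obtain ⟨kb, hsb, hpb⟩ := sum_prod_sign (N - 1) (fun n => b n * b (n + 1))
    (fun n hn => by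
      rcases hb n (by omega) with h' | h' <;> rcases hb (n + 1) (by omega) with h'' | h'' <;>
        simp [h', h''])
  have hta := telescope (N - 1) a (fun n hn => ha n (by omega))
  have htb := telescope (N - 1) b (fun n hn => hb n (by omega))
  rw [hta] at hpa
  rw [htb] at hpb
  -- rewrite e1
  unfold rhoR at e1
  rw [hsa, hsb] at e1
  -- so ka + kb = N - 1
  have hk : (ka : ℝ) + kb = (N - 1 : ℕ) := by linarith
  have hknat : ka + kb = N - 1 := by exact_mod_cast hk
  -- rewrite e2
  unfold rhoR at e2
  have hNN : N - (N - 1) = 1 := by omega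
  rw [hNN] at e2
  simp only [range_one, sum_singleton, Nat.zero_add] at e2
  -- e2 : a 0 * a (0 + (N-1)) + b 0 * b (0 + (N-1)) = 0
  have e2' : a 0 * a (N - 1) + b 0 * b (N - 1) = 0 := by
    simpa using e2
  have hasq : (a 0 * a (N - 1)) * (a 0 * a (N - 1)) = 1 := by
    rcases ha 0 (by omega) with h' | h' <;> rcases ha (N - 1) (by omega) with h'' | h'' <;>
      rw [h', h''] <;> norm_num
  have hb' : b 0 * b (N - 1) = -(a 0 * a (N - 1)) := by linarith
  have hprod : (a 0 * a (N - 1)) * (b 0 * b (N - 1)) = -1 := by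
    rw [hb', mul_neg, hasq]
  have hpow : (-1 : ℝ) ^ (ka + kb) = -1 := by
    rw [pow_add, ← hpa, ← hpb, hprod]
  have hodd : Odd (ka + kb) := by
    by_contra hcon
    rw [Nat.not_odd_iff_even] at hcon
    rw [hcon.neg_one_pow] at hpow
    norm_num at hpow
  rw [hknat] at hodd
  have : Odd (N - 1) := hodd
  rcases this with ⟨m, hm⟩
  exact ⟨m + 1, by omega⟩
end

section
/- Let (a,b) be a binary (N,Z)-CZCP over {-1,+1}. Then a_i + a_{N-1-i} + b_i + b_{N-1-i} = ±2 for all i ∈ {0,1,...,Z-1}. -/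
open Finset

/-- Integer sign sequence associated to a real ±1 sequence. -/
noncomputable def Asgn (a : ℕ → ℝ) (n : ℕ) : ℤ := if a n = 1 then 1 else -1

/-- Product of the signs of two sequences. -/
noncomputable def Csgn (a b : ℕ → ℝ) (n : ℕ) : ℤ := Asgn a n * Asgn b n

lemma Asgn_pm (a : ℕ → ℝ) (n : ℕ) : Asgn a n = 1 ∨ Asgn a n = -1 := by
  unfold Asgn; split <;> simp

lemma Asgn_cast (a : ℕ → ℝ) (n : ℕ) (h : a n = 1 ∨ a n = -1) :
    ((Asgn a n : ℤ) : ℝ) = a n := by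
  unfold Asgn
  rcases h with h | h
  · rw [if_pos h, h]; norm_num
  · rw [if_neg (by rw [h]; norm_num), h]; norm_num

lemma Csgn_pm (a b : ℕ → ℝ) (n : ℕ) : Csgn a b n = 1 ∨ Csgn a b n = -1 := by
  unfold Csgn
  rcases Asgn_pm a n with h | h <;> rcases Asgn_pm b n with h' | h' <;>
    rw [h, h'] <;> norm_num

lemma even_of_sum_pm (s : Finset ℕ) (f : ℕ → ℤ)
    (hf : ∀ n ∈ s, f n = 1 ∨ f n = -1) (h0 : ∑ n ∈ s, f n = 0) :
    2 ∣ s.card := by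
  have h1 : (s.card : ℤ) = ∑ n ∈ s, (1 - f n) := by
    rw [Finset.sum_sub_distrib, h0]; simp
  have h2 : (2 : ℤ) ∣ (s.card : ℤ) := by
    rw [h1]
    exact Finset.dvd_sum fun n hn => by rcases hf n hn with h | h <;> rw [h] <;> norm_num
  exact_mod_cast h2

/-- indicator of `C n = 1 ∧ C (n+τ) = 1` -/
noncomputable def pInd (a b : ℕ → ℝ) (τ n : ℕ) : ℕ :=
  if Csgn a b n = 1 ∧ Csgn a b (n + τ) = 1 then 1 else 0

/-- indicator of `C n = -1 ∧ C (n+τ) = -1` -/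
noncomputable def qInd (a b : ℕ → ℝ) (τ n : ℕ) : ℕ :=
  if Csgn a b n = -1 ∧ Csgn a b (n + τ) = -1 then 1 else 0

/-- indicator of `C n = -1 ∧ C (i-n) = 1` -/
noncomputable def sInd (a b : ℕ → ℝ) (i n : ℕ) : ℕ :=
  if Csgn a b n = -1 ∧ Csgn a b (i - n) = 1 then 1 else 0

lemma czcp_key (N Z : ℕ) (hZN : Z < N) (a b : ℕ → ℝ)
    (ha : ∀ n < N, a n = 1 ∨ a n = -1) (hb : ∀ n < N, b n = 1 ∨ b n = -1)
    (hC1 : ∀ τ, (1 ≤ τ ∧ τ ≤ Z) ∨ (N - Z ≤ τ ∧ τ ≤ N - 1) →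
      rhoR N a a τ + rhoR N b b τ = 0)
    (hC2 : ∀ τ, N - Z ≤ τ → τ ≤ N - 1 → rhoR N a b τ + rhoR N b a τ = 0) :
    ∀ i, i < Z → Csgn a b i * Csgn a b (N - 1 - i) = -1 := by
  have hAcast : ∀ n < N, ((Asgn a n : ℤ) : ℝ) = a n := fun n hn => Asgn_cast a n (ha n hn)
  have hBcast : ∀ n < N, ((Asgn b n : ℤ) : ℝ) = b n := fun n hn => Asgn_cast b n (hb n hn)
  intro i
  induction i using Nat.strong_induction_on with
  | _ i IH =>
  intro hiZ
  have hiN : i < N := lt_trans hiZ hZN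
  set τ := N - 1 - i with hτ
  have h1 := hC1 τ (Or.inr ⟨by omega, by omega⟩)
  have h2 := hC2 τ (by omega) (by omega)
  simp only [rhoR] at h1 h2
  rw [show N - τ = i + 1 by omega] at h1 h2
  -- real-valued sum identities
  have hUr : ∑ n ∈ Finset.range (i + 1), (a n + b n) * (a (n + τ) + b (n + τ)) = 0 := by
    have e : ∑ n ∈ Finset.range (i + 1), (a n + b n) * (a (n + τ) + b (n + τ))
        = (∑ n ∈ Finset.range (i + 1), a n * a (n + τ)
            + ∑ n ∈ Finset.range (i + 1), b n * b (n + τ))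
          + (∑ n ∈ Finset.range (i + 1), a n * b (n + τ)
            + ∑ n ∈ Finset.range (i + 1), b n * a (n + τ)) := by
      rw [← Finset.sum_add_distrib, ← Finset.sum_add_distrib, ← Finset.sum_add_distrib]
      exact Finset.sum_congr rfl fun n _ => by ring
    rw [e, h1, h2]; ring
  have hVr : ∑ n ∈ Finset.range (i + 1), (a n - b n) * (a (n + τ) - b (n + τ)) = 0 := by
    have e : ∑ n ∈ Finset.range (i + 1), (a n - b n) * (a (n + τ) - b (n + τ))
        = (∑ n ∈ Finset.range (i + 1), a n * a (n + τ)
            + ∑ n ∈ Finset.range (i + 1), b n * b (n + τ))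
          - (∑ n ∈ Finset.range (i + 1), a n * b (n + τ)
            + ∑ n ∈ Finset.range (i + 1), b n * a (n + τ)) := by
      rw [← Finset.sum_add_distrib, ← Finset.sum_add_distrib, ← Finset.sum_sub_distrib]
      exact Finset.sum_congr rfl fun n _ => by ring
    rw [e, h1, h2]; ring
  have hmem : ∀ n ∈ Finset.range (i + 1), n < N ∧ n + τ < N := by
    intro n hn
    rw [Finset.mem_range] at hn
    omega
  -- integer versions
  have hUZ : ∑ n ∈ Finset.range (i + 1),
      (Asgn a n + Asgn b n) * (Asgn a (n + τ) + Asgn b (n + τ)) = (0 : ℤ) := by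
    have hcast : ((∑ n ∈ Finset.range (i + 1),
        (Asgn a n + Asgn b n) * (Asgn a (n + τ) + Asgn b (n + τ)) : ℤ) : ℝ)
        = ∑ n ∈ Finset.range (i + 1), (a n + b n) * (a (n + τ) + b (n + τ)) := by
      push_cast
      refine Finset.sum_congr rfl fun n hn => ?_
      obtain ⟨hn1, hn2⟩ := hmem n hn
      rw [hAcast n hn1, hBcast n hn1, hAcast _ hn2, hBcast _ hn2]
    exact_mod_cast hcast.trans hUr
  have hVZ : ∑ n ∈ Finset.range (i + 1),
      (Asgn a n - Asgn b n) * (Asgn a (n + τ) - Asgn b (n + τ)) = (0 : ℤ) := by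
    have hcast : ((∑ n ∈ Finset.range (i + 1),
        (Asgn a n - Asgn b n) * (Asgn a (n + τ) - Asgn b (n + τ)) : ℤ) : ℝ)
        = ∑ n ∈ Finset.range (i + 1), (a n - b n) * (a (n + τ) - b (n + τ)) := by
      push_cast
      refine Finset.sum_congr rfl fun n hn => ?_
      obtain ⟨hn1, hn2⟩ := hmem n hn
      rw [hAcast n hn1, hBcast n hn1, hAcast _ hn2, hBcast _ hn2]
    exact_mod_cast hcast.trans hVr
  by_cases hi0 : i = 0
  · -- base case
    subst hi0
    rw [Finset.sum_range_one] at hUZ hVZ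
    simp only [zero_add] at hUZ hVZ
    simp only [Csgn]
    rcases Asgn_pm a 0 with h1' | h1' <;> rcases Asgn_pm b 0 with h2' | h2' <;>
      rcases Asgn_pm a τ with h3' | h3' <;> rcases Asgn_pm b τ with h4' | h4' <;>
      rw [h1', h2', h3', h4'] at hUZ hVZ ⊢ <;> norm_num at hUZ <;> norm_num at hVZ <;> norm_num
  · have hi1 : 1 ≤ i := by omega
    -- flipping lemma from the induction hypothesis
    have hflip : ∀ n, 1 ≤ n → n ≤ i → Csgn a b (n + τ) = - Csgn a b (i - n) := by
      intro n hn1 hn2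
      have hIH := IH (i - n) (by omega) (by omega)
      have he : n + τ = N - 1 - (i - n) := by omega
      rw [he]
      rcases Csgn_pm a b (i - n) with h | h <;> rw [h] at hIH ⊢ <;> linarith
    -- pointwise ite forms
    have hUite : ∀ n : ℕ, (Asgn a n + Asgn b n) * (Asgn a (n + τ) + Asgn b (n + τ))
        = if Csgn a b n = 1 ∧ Csgn a b (n + τ) = 1
            then 4 * (Asgn a n * Asgn a (n + τ)) else 0 := by
      intro n
      rcases Asgn_pm a n with h1' | h1' <;> rcases Asgn_pm b n with h2' | h2' <;>
        rcases Asgn_pm a (n + τ) with h3' | h3' <;> rcases Asgn_pm b (n + τ) with h4' | h4' <;>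
        norm_num [Csgn, h1', h2', h3', h4']
    have hVite : ∀ n : ℕ, (Asgn a n - Asgn b n) * (Asgn a (n + τ) - Asgn b (n + τ))
        = if Csgn a b n = -1 ∧ Csgn a b (n + τ) = -1
            then 4 * (Asgn a n * Asgn a (n + τ)) else 0 := by
      intro n
      rcases Asgn_pm a n with h1' | h1' <;> rcases Asgn_pm b n with h2' | h2' <;>
        rcases Asgn_pm a (n + τ) with h3' | h3' <;> rcases Asgn_pm b (n + τ) with h4' | h4' <;>
        norm_num [Csgn, h1', h2', h3', h4']
    have hAApm : ∀ n m : ℕ, Asgn a n * Asgn a m = 1 ∨ Asgn a n * Asgn a m = -1 := by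
      intro n m
      rcases Asgn_pm a n with h | h <;> rcases Asgn_pm a m with h' | h' <;>
        rw [h, h'] <;> norm_num
    -- parity of the two filtered cardinalities
    have hPfil : ∑ n ∈ (Finset.range (i + 1)).filter
        (fun n => Csgn a b n = 1 ∧ Csgn a b (n + τ) = 1),
        (Asgn a n * Asgn a (n + τ)) = 0 := by
      have h4 : (4 : ℤ) * ∑ n ∈ (Finset.range (i + 1)).filter
          (fun n => Csgn a b n = 1 ∧ Csgn a b (n + τ) = 1),
          (Asgn a n * Asgn a (n + τ)) = 0 := by
        rw [Finset.mul_sum, Finset.sum_filter]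
        simpa only [hUite] using hUZ
      linarith
    have hQfil : ∑ n ∈ (Finset.range (i + 1)).filter
        (fun n => Csgn a b n = -1 ∧ Csgn a b (n + τ) = -1),
        (Asgn a n * Asgn a (n + τ)) = 0 := by
      have h4 : (4 : ℤ) * ∑ n ∈ (Finset.range (i + 1)).filter
          (fun n => Csgn a b n = -1 ∧ Csgn a b (n + τ) = -1),
          (Asgn a n * Asgn a (n + τ)) = 0 := by
        rw [Finset.mul_sum, Finset.sum_filter]
        simpa only [hVite] using hVZ
      linarith
    have hP : 2 ∣ ∑ n ∈ Finset.range (i + 1), pInd a b τ n := by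
      have hc := even_of_sum_pm _ _ (fun n _ => hAApm n (n + τ)) hPfil
      rw [Finset.card_filter] at hc
      simpa [pInd] using hc
    have hQ : 2 ∣ ∑ n ∈ Finset.range (i + 1), qInd a b τ n := by
      have hc := even_of_sum_pm _ _ (fun n _ => hAApm n (n + τ)) hQfil
      rw [Finset.card_filter] at hc
      simpa [qInd] using hc
    -- decompositions
    have d1 : ∑ n ∈ Finset.range (i + 1), pInd a b τ n
        = pInd a b τ 0 + ∑ n ∈ Finset.Ico 1 (i + 1), pInd a b τ n := by
      rw [Finset.range_eq_Ico, Finset.sum_eq_sum_Ico_succ_bot (by omega)]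
    have d2 : ∑ n ∈ Finset.Ico 1 (i + 1), pInd a b τ n
        = ∑ k ∈ Finset.Ico 0 i, sInd a b i k := by
      refine Finset.sum_nbij' (fun n => i - n) (fun k => i - k) ?_ ?_ ?_ ?_ ?_
      · intro n hn; simp only [Finset.mem_Ico] at hn ⊢; omega
      · intro k hk; simp only [Finset.mem_Ico] at hk ⊢; omega
      · intro n hn; simp only [Finset.mem_Ico] at hn; show i - (i - n) = n; omega
      · intro k hk; simp only [Finset.mem_Ico] at hk; show i - (i - k) = k; omega
      · intro n hn
        simp only [Finset.mem_Ico] at hn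
        have hfl := hflip n hn.1 (by omega)
        have hnn : i - (i - n) = n := by omega
        simp only [pInd, sInd, hnn]
        rw [hfl]
        rcases Csgn_pm a b n with h | h <;> rcases Csgn_pm a b (i - n) with h' | h' <;>
          norm_num [h, h']
    have d3 : ∑ k ∈ Finset.Ico 0 i, sInd a b i k
        = sInd a b i 0 + ∑ k ∈ Finset.Ico 1 i, sInd a b i k :=
      Finset.sum_eq_sum_Ico_succ_bot (by omega) _
    have d4 : ∑ k ∈ Finset.Ico 1 i, sInd a b i k
        = ∑ k ∈ Finset.Ico 1 i, qInd a b τ k := by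
      refine Finset.sum_congr rfl fun k hk => ?_
      simp only [Finset.mem_Ico] at hk
      have hfl := hflip k hk.1 (by omega)
      simp only [sInd, qInd]
      rw [hfl]
      rcases Csgn_pm a b k with h | h <;> rcases Csgn_pm a b (i - k) with h' | h' <;>
        norm_num [h, h']
    have d5 : ∑ n ∈ Finset.range (i + 1), qInd a b τ n
        = qInd a b τ 0 + (∑ n ∈ Finset.Ico 1 i, qInd a b τ n + qInd a b τ i) := by
      rw [Finset.range_eq_Ico, Finset.sum_eq_sum_Ico_succ_bot (by omega),
        Finset.sum_Ico_succ_top (by omega)]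
    rw [d1, d2, d3, d4] at hP
    rw [d5] at hQ
    have hit : Csgn a b (i + τ) = - Csgn a b 0 := by
      have := hflip i hi1 (le_refl i)
      simpa using this
    by_contra hcon
    rcases Csgn_pm a b 0 with hα | hα <;> rcases Csgn_pm a b i with hβ | hβ <;>
      rcases Csgn_pm a b τ with hγ | hγ
    all_goals try (apply hcon; rw [hβ, hγ]; norm_num)
    all_goals
      norm_num [pInd, qInd, sInd, hit, hα, hβ, hγ] at hP hQ <;> omega

/-- For a binary (N,Z)-CZCP (a,b) over {-1,+1}:
a_i + a_{N-1-i} + b_i + b_{N-1-i} = ±2 for all i ∈ {0,...,Z-1}. -/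
theorem stmt8 (N Z : ℕ) (hN : 1 ≤ N) (a b : ℕ → ℝ)
    (ha : ∀ n < N, a n = 1 ∨ a n = -1) (hb : ∀ n < N, b n = 1 ∨ b n = -1)
    (hC1 : ∀ τ, (1 ≤ τ ∧ τ ≤ Z) ∨ (N - Z ≤ τ ∧ τ ≤ N - 1) →
      rhoR N a a τ + rhoR N b b τ = 0)
    (hC2 : ∀ τ, N - Z ≤ τ → τ ≤ N - 1 → rhoR N a b τ + rhoR N b a τ = 0) :
    ∀ i < Z, a i + a (N - 1 - i) + b i + b (N - 1 - i) = 2 ∨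
             a i + a (N - 1 - i) + b i + b (N - 1 - i) = -2 := by
  intro i hiZ
  by_cases hZN : N ≤ Z
  · exfalso
    have h := hC1 0 (Or.inr ⟨by omega, by omega⟩)
    simp only [rhoR, Nat.sub_zero] at h
    have e1 : ∀ n ∈ Finset.range N, a n * a (n + 0) = (1 : ℝ) := by
      intro n hn
      rcases ha n (Finset.mem_range.mp hn) with h' | h' <;>
        rw [Nat.add_zero, h'] <;> norm_num
    have e2 : ∀ n ∈ Finset.range N, b n * b (n + 0) = (1 : ℝ) := by
      intro n hn
      rcases hb n (Finset.mem_range.mp hn) with h' | h' <;>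
        rw [Nat.add_zero, h'] <;> norm_num
    rw [Finset.sum_congr rfl e1, Finset.sum_congr rfl e2, Finset.sum_const,
      Finset.card_range] at h
    simp only [nsmul_eq_mul, mul_one] at h
    have : (N : ℝ) ≥ 1 := by exact_mod_cast hN
    linarith
  · push_neg at hZN
    have hiN : i < N := lt_trans hiZ hZN
    have hjN : N - 1 - i < N := by omega
    have hkey := czcp_key N Z hZN a b ha hb hC1 hC2 i hiZ
    have hcast : ((Csgn a b i * Csgn a b (N - 1 - i) : ℤ) : ℝ)
        = (a i * b i) * (a (N - 1 - i) * b (N - 1 - i)) := by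
      simp only [Csgn]
      push_cast
      rw [Asgn_cast a i (ha i hiN), Asgn_cast b i (hb i hiN),
        Asgn_cast a _ (ha _ hjN), Asgn_cast b _ (hb _ hjN)]
    rw [hkey] at hcast
    have hR : (a i * b i) * (a (N - 1 - i) * b (N - 1 - i)) = -1 := by
      rw [← hcast]; norm_num
    rcases ha i hiN with h1 | h1 <;> rcases hb i hiN with h2 | h2 <;>
      rcases ha _ hjN with h3 | h3 <;> rcases hb _ hjN with h4 | h4 <;>
      rw [h1, h2, h3, h4] at hR ⊢ <;> norm_num at hR <;> norm_num
end

section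
/- Let (e,f) be a q-ary Golay complementary pair of length M (q even), and let υ₁, υ₂, υ ∈ ℤ_q with υ₁ - υ₂ ≡ 0 or q/2 (mod q). Define a = [ω^{υ₁}·e, ω^{υ₁+υ}·f] and b = [ω^{υ₂}·e, -ω^{υ₂+υ}·f], concatenations of length N = 2M, where ω = exp(2πi/q). Then ρ(a,b)(τ) + ρ(b,a)(τ) = 0 for all τ with M ≤ τ ≤ 2M-1. -/
open Finset

/-- From a q-ary GCP (e,f) of length M (q even) and υ₁-υ₂ ≡ 0 or q/2 (mod q),
the concatenated pair a = [ω^{υ₁}e, ω^{υ₁+υ}f], b = [ω^{υ₂}e, -ω^{υ₂+υ}f] has zero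
cross-correlation sums ρ(a,b)(τ)+ρ(b,a)(τ)=0 for M ≤ τ ≤ 2M-1. -/
theorem stmt9 (q M : ℕ) (hq : Even q) (hq0 : 0 < q)
    (e f : ℕ → ℂ)
    (he : ∀ n < M, (e n) ^ q = 1) (hf : ∀ n < M, (f n) ^ q = 1)
    (hGCP : ∀ τ, 1 ≤ τ → τ ≤ M - 1 → rho M e e τ + rho M f f τ = 0)
    (υ1 υ2 υ : ℤ)
    (hυ : (υ1 - υ2) % (q : ℤ) = 0 ∨ (υ1 - υ2) % (q : ℤ) = (q : ℤ) / 2) :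
    ∀ τ, M ≤ τ → τ ≤ 2 * M - 1 →
      (rho (2 * M)
        (fun n => if n < M then Complex.exp (2 * Real.pi * Complex.I / q) ^ υ1 * e n
                  else Complex.exp (2 * Real.pi * Complex.I / q) ^ (υ1 + υ) * f (n - M))
        (fun n => if n < M then Complex.exp (2 * Real.pi * Complex.I / q) ^ υ2 * e n
                  else -(Complex.exp (2 * Real.pi * Complex.I / q) ^ (υ2 + υ) * f (n - M))) τ)
      + (rho (2 * M)
        (fun n => if n < M then Complex.exp (2 * Real.pi * Complex.I / q) ^ υ2 * e n
                  else -(Complex.exp (2 * Real.pi * Complex.I / q) ^ (υ2 + υ) * f (n - M)))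
        (fun n => if n < M then Complex.exp (2 * Real.pi * Complex.I / q) ^ υ1 * e n
                  else Complex.exp (2 * Real.pi * Complex.I / q) ^ (υ1 + υ) * f (n - M)) τ) = 0 := by
  intro τ hτ1 hτ2
  set ω : ℂ := Complex.exp (2 * Real.pi * Complex.I / q) with hω
  have hω0 : ω ≠ 0 := Complex.exp_ne_zero _
  have hqC : (q : ℂ) ≠ 0 := Nat.cast_ne_zero.mpr hq0.ne'
  have hωq : ω ^ (q : ℕ) = 1 := by
    rw [hω, ← Complex.exp_nat_mul]
    rw [show (q : ℂ) * (2 * Real.pi * Complex.I / q) = 2 * Real.pi * Complex.I by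
      field_simp]
    exact Complex.exp_two_pi_mul_I
  have h2q : (2 : ℤ) ∣ (q : ℤ) := Int.natCast_dvd_natCast.mpr hq.two_dvd
  have hdvd : (q : ℤ) ∣ 2 * (υ1 - υ2) := by
    rcases hυ with h | h
    · exact Dvd.dvd.mul_left (Int.dvd_of_emod_eq_zero h) 2
    · refine ⟨2 * ((υ1 - υ2) / q) + 1, ?_⟩
      have h1 := Int.mul_ediv_add_emod (υ1 - υ2) (q : ℤ)
      have h2 : (q : ℤ) / 2 * 2 = q := Int.ediv_mul_cancel h2q
      rw [h] at h1
      linarith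
  have hkey : ω ^ (υ1 - υ2) = ω ^ (υ2 - υ1) := by
    obtain ⟨k, hk⟩ := hdvd
    have h1 : ω ^ (2 * (υ1 - υ2)) = 1 := by
      rw [hk, zpow_mul, zpow_natCast, hωq, one_zpow]
    calc ω ^ (υ1 - υ2) = ω ^ ((υ2 - υ1) + 2 * (υ1 - υ2)) := by ring_nf
      _ = ω ^ (υ2 - υ1) * ω ^ (2 * (υ1 - υ2)) := zpow_add₀ hω0 _ _
      _ = ω ^ (υ2 - υ1) := by rw [h1, mul_one]
  have hcω : (starRingEnd ℂ) ω = ω⁻¹ := by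
    rw [hω, ← Complex.exp_conj, ← Complex.exp_neg]
    congr 1
    have : (starRingEnd ℂ) (2 * (Real.pi : ℂ) * Complex.I / q)
        = 2 * (Real.pi : ℂ) * (-Complex.I) / q := by
      simp [map_div₀, Complex.conj_I, map_ofNat]
    rw [this]; ring
  have hconj : ∀ z : ℤ, (starRingEnd ℂ) (ω ^ z) = ω ^ (-z) := by
    intro z
    rw [map_zpow₀, hcω, inv_zpow, ← zpow_neg]
  have hcoef : ω ^ υ1 * ω ^ (-(υ2 + υ)) = ω ^ υ2 * ω ^ (-(υ1 + υ)) := by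
    rw [← zpow_add₀ hω0, ← zpow_add₀ hω0,
      show υ1 + -(υ2 + υ) = (υ1 - υ2) + -υ by ring,
      show υ2 + -(υ1 + υ) = (υ2 - υ1) + -υ by ring,
      zpow_add₀ hω0, zpow_add₀ hω0, hkey]
  unfold rho
  rw [← Finset.sum_add_distrib]
  apply Finset.sum_eq_zero
  intro n hn
  have hn' : n < 2 * M - τ := Finset.mem_range.mp hn
  have h1 : n < M := by omega
  have h2 : ¬ (n + τ < M) := by omega
  simp only [if_pos h1, if_neg h2, map_neg, map_mul, hconj]
  set C := (starRingEnd ℂ) (f (n + τ - M))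
  linear_combination (-(e n * C)) * hcoef
end

section
/- Let (e,f) be a q-ary GCP of length M and υ₁, υ₂, υ ∈ ℤ_q (q even) with υ₁ - υ₂ ≡ 0 or q/2 (mod q). Then the pair a = [ω^{υ₁}·e, ω^{υ₁+υ}·f], b = [ω^{υ₂}·e, -ω^{υ₂+υ}·f] of length N = 2M is a perfect (N, N/2)-CZCP, i.e., ρ(a)(τ)+ρ(b)(τ)=0 for all 1 ≤ τ ≤ N-1 and ρ(a,b)(τ)+ρ(b,a)(τ)=0 for all N/2 ≤ τ ≤ N-1. -/
open Finset

/-- From a q-ary GCP (e,f) of length M (q even), υ₁-υ₂ ≡ 0 or q/2 (mod q), the pair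
a = [ω^{υ₁}e, ω^{υ₁+υ}f], b = [ω^{υ₂}e, -ω^{υ₂+υ}f] of length N = 2M is a perfect
(N, N/2)-CZCP. -/
theorem stmt11 (q M : ℕ) (hq : Even q) (hq0 : 0 < q)
    (e f : ℕ → ℂ)
    (he : ∀ n < M, (e n) ^ q = 1) (hf : ∀ n < M, (f n) ^ q = 1)
    (hGCP : ∀ τ, 1 ≤ τ → τ ≤ M - 1 → rho M e e τ + rho M f f τ = 0)
    (υ1 υ2 υ : ℤ)
    (hυ : (υ1 - υ2) % (q : ℤ) = 0 ∨ (υ1 - υ2) % (q : ℤ) = (q : ℤ) / 2)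
    (a b : ℕ → ℂ)
    (hadef : a = fun n => if n < M then Complex.exp (2 * Real.pi * Complex.I / q) ^ υ1 * e n
                  else Complex.exp (2 * Real.pi * Complex.I / q) ^ (υ1 + υ) * f (n - M))
    (hbdef : b = fun n => if n < M then Complex.exp (2 * Real.pi * Complex.I / q) ^ υ2 * e n
                  else -(Complex.exp (2 * Real.pi * Complex.I / q) ^ (υ2 + υ) * f (n - M))) :
    (∀ τ, 1 ≤ τ → τ ≤ 2 * M - 1 →
      rho (2 * M) a a τ + rho (2 * M) b b τ = 0) ∧
    (∀ τ, M ≤ τ → τ ≤ 2 * M - 1 →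
      rho (2 * M) a b τ + rho (2 * M) b a τ = 0) := by
  set ω : ℂ := Complex.exp (2 * Real.pi * Complex.I / q) with hωdef
  have hω0 : ω ≠ 0 := Complex.exp_ne_zero _
  have hconj : (starRingEnd ℂ) ω = ω⁻¹ := by
    rw [hωdef, ← Complex.exp_conj, ← Complex.exp_neg]
    congr 1
    have hqc : (q : ℂ) ≠ 0 := Nat.cast_ne_zero.mpr hq0.ne'
    simp [map_div₀, Complex.conj_I, map_ofNat]
    ring
  have hE : ∀ j k : ℤ, ω ^ j * (starRingEnd ℂ) (ω ^ k) = ω ^ (j - k) := by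
    intro j k
    rw [map_zpow₀, hconj, inv_zpow, ← zpow_neg, ← zpow_add₀ hω0, sub_eq_add_neg]
  have hA : ∀ k : ℤ, ω ^ k * (starRingEnd ℂ) (ω ^ k) = 1 := by
    intro k; rw [hE, sub_self, zpow_zero]
  have hωq : ω ^ (q : ℕ) = 1 := by
    rw [hωdef, ← Complex.exp_nat_mul]
    rw [show (q : ℂ) * (2 * Real.pi * Complex.I / q) = 2 * Real.pi * Complex.I by
      have hqc : (q : ℂ) ≠ 0 := Nat.cast_ne_zero.mpr hq0.ne'
      field_simp]
    exact Complex.exp_two_pi_mul_I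
  have hd : (q : ℤ) ∣ 2 * (υ1 - υ2) := by
    obtain ⟨r, hr⟩ := hq
    have hq2 : (q : ℤ) = 2 * r := by push_cast [hr]; ring
    rcases hυ with h | h
    · exact Dvd.dvd.mul_left (Int.dvd_of_emod_eq_zero h) 2
    · have h1 : (q : ℤ) * ((υ1 - υ2) / q) + (q : ℤ) / 2 = υ1 - υ2 := by
        rw [← h]; exact Int.mul_ediv_add_emod _ _
      have hhalf : (q : ℤ) / 2 = r := by omega
      rw [hhalf] at h1
      exact ⟨2 * ((υ1 - υ2) / q) + 1, by linear_combination -2 * h1 - hq2⟩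
  have hper : ω ^ (2 * (υ1 - υ2)) = 1 := by
    obtain ⟨t, ht⟩ := hd
    rw [ht, zpow_mul, zpow_natCast, hωq, one_zpow]
  have h2 : ω ^ (υ1 - υ2) = ω ^ (υ2 - υ1) := by
    have h3 : ω ^ (υ2 - υ1) * ω ^ (2 * (υ1 - υ2)) = ω ^ (υ1 - υ2) := by
      rw [← zpow_add₀ hω0]; congr 1; ring
    rw [hper, mul_one] at h3
    exact h3.symm
  have hc : ω ^ υ1 * (starRingEnd ℂ) (ω ^ (υ1 + υ)) =
      ω ^ υ2 * (starRingEnd ℂ) (ω ^ (υ2 + υ)) := by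
    rw [hE, hE]; congr 1; ring
  have hc2 : ω ^ υ1 * (starRingEnd ℂ) (ω ^ (υ2 + υ)) =
      ω ^ υ2 * (starRingEnd ℂ) (ω ^ (υ1 + υ)) := by
    rw [hE, hE]
    calc ω ^ (υ1 - (υ2 + υ)) = ω ^ (υ1 - υ2) * ω ^ (-υ) := by
          rw [← zpow_add₀ hω0]; congr 1; ring
      _ = ω ^ (υ2 - υ1) * ω ^ (-υ) := by rw [h2]
      _ = ω ^ (υ2 - (υ1 + υ)) := by rw [← zpow_add₀ hω0]; congr 1; ring
  constructor
  · intro τ hτ1 hτ2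
    simp only [rho, hadef, hbdef, ← Finset.sum_add_distrib]
    rcases lt_or_ge τ M with hτM | hτM
    · -- τ < M
      have key : ∑ n ∈ Finset.range (2 * M - τ),
          (if n + τ < M then 2 * (e n * (starRingEnd ℂ) (e (n + τ)))
           else if n < M then 0
           else 2 * (f (n - M) * (starRingEnd ℂ) (f (n + τ - M)))) = 0 := by
        rw [Finset.range_eq_Ico,
          ← Finset.sum_Ico_consecutive _ (Nat.zero_le M) (by omega : M ≤ 2 * M - τ),
          ← Finset.sum_Ico_consecutive _ (Nat.zero_le (M - τ)) (by omega : M - τ ≤ M)]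
        have hs1 : ∑ n ∈ Finset.Ico 0 (M - τ),
            (if n + τ < M then 2 * (e n * (starRingEnd ℂ) (e (n + τ)))
             else if n < M then 0
             else 2 * (f (n - M) * (starRingEnd ℂ) (f (n + τ - M)))) = 2 * rho M e e τ := by
          rw [rho, Finset.mul_sum, ← Finset.range_eq_Ico]
          refine Finset.sum_congr rfl fun n hn => ?_
          simp only [Finset.mem_range] at hn
          rw [if_pos (by omega : n + τ < M)]
        have hs2 : ∑ n ∈ Finset.Ico (M - τ) M,
            (if n + τ < M then 2 * (e n * (starRingEnd ℂ) (e (n + τ)))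
             else if n < M then 0
             else 2 * (f (n - M) * (starRingEnd ℂ) (f (n + τ - M)))) = 0 := by
          refine Finset.sum_eq_zero fun n hn => ?_
          simp only [Finset.mem_Ico] at hn
          rw [if_neg (by omega : ¬ n + τ < M), if_pos (by omega : n < M)]
        have hs3 : ∑ n ∈ Finset.Ico M (2 * M - τ),
            (if n + τ < M then 2 * (e n * (starRingEnd ℂ) (e (n + τ)))
             else if n < M then 0
             else 2 * (f (n - M) * (starRingEnd ℂ) (f (n + τ - M)))) = 2 * rho M f f τ := by
          rw [Finset.sum_Ico_eq_sum_range, rho, Finset.mul_sum,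
            show 2 * M - τ - M = M - τ from by omega]
          refine Finset.sum_congr rfl fun n hn => ?_
          simp only [Finset.mem_range] at hn
          rw [if_neg (by omega : ¬ M + n + τ < M), if_neg (by omega : ¬ M + n < M),
            show M + n - M = n from by omega, show M + n + τ - M = n + τ from by omega]
        rw [hs1, hs2, hs3]
        have hg := hGCP τ hτ1 (by omega)
        linear_combination 2 * hg
      rw [← key]
      refine Finset.sum_congr rfl fun n hn => ?_
      simp only [Finset.mem_range] at hn
      by_cases h1 : n + τ < M
      · have hnM : n < M := by omega
        simp only [if_pos h1, if_pos hnM, map_mul]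
        linear_combination (e n * (starRingEnd ℂ) (e (n + τ))) * hA υ1
          + (e n * (starRingEnd ℂ) (e (n + τ))) * hA υ2
      · by_cases hnM : n < M
        · simp only [if_neg h1, if_pos hnM, map_mul, map_neg]
          linear_combination (e n * (starRingEnd ℂ) (f (n + τ - M))) * hc
        · simp only [if_neg h1, if_neg hnM, map_mul, map_neg]
          linear_combination (f (n - M) * (starRingEnd ℂ) (f (n + τ - M))) * hA (υ1 + υ)
            + (f (n - M) * (starRingEnd ℂ) (f (n + τ - M))) * hA (υ2 + υ)
    · -- τ ≥ M
      refine Finset.sum_eq_zero fun n hn => ?_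
      simp only [Finset.mem_range] at hn
      simp only [if_pos (show n < M by omega), if_neg (show ¬ n + τ < M by omega),
        map_mul, map_neg]
      linear_combination (e n * (starRingEnd ℂ) (f (n + τ - M))) * hc
  · intro τ hτ1 hτ2
    simp only [rho, hadef, hbdef, ← Finset.sum_add_distrib]
    refine Finset.sum_eq_zero fun n hn => ?_
    simp only [Finset.mem_range] at hn
    simp only [if_pos (show n < M by omega), if_neg (show ¬ n + τ < M by omega),
      map_mul, map_neg]
    linear_combination -(e n * (starRingEnd ℂ) (f (n + τ - M))) * hc2
end

section
/- Let (a,b) be an (N,Z)-CZCP, and for even M define sequences a_m = a if m is odd and a_m = b if m is even, for m = 1,...,M. Then {a_1,...,a_M} is an (N,Z)-CZCS: Σ_{m=1}^M ρ(a_m)(τ) = 0 for all τ with 1 ≤ τ ≤ Z or N-Z ≤ τ ≤ N-1, and Σ_{m=1}^M ρ(a_m, a_{(m mod M)+1})(τ) = 0 for all τ with N-Z ≤ τ ≤ N-1. -/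
open Finset

/-- The m-th sequence: a if m is odd, b if m is even. -/
def am (a b : ℕ → ℂ) (m : ℕ) : ℕ → ℂ := if m % 2 = 1 then a else b

lemma pair_sum (k : ℕ) (f : ℕ → ℂ) :
    ∑ m ∈ Finset.Icc 1 (2 * k), f m = ∑ j ∈ Finset.range k, (f (2 * j + 1) + f (2 * j + 2)) := by
  induction k with
  | zero => simp
  | succ n ih =>
    have h1 : 2 * (n + 1) = (2 * n + 1) + 1 := by ring
    rw [h1, Finset.sum_Icc_succ_top (by omega), Finset.sum_Icc_succ_top (by omega), ih,
      Finset.sum_range_succ]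
    ring

lemma am_odd (a b : ℕ → ℂ) (j : ℕ) : am a b (2 * j + 1) = a := by
  have : (2 * j + 1) % 2 = 1 := by omega
  simp [am, this]

lemma am_even (a b : ℕ → ℂ) (j : ℕ) : am a b (2 * j + 2) = b := by
  have : (2 * j + 2) % 2 = 0 := by omega
  simp [am, this]

/-- From an (N,Z)-CZCP (a,b) and even M, the set {a_1,...,a_M} with a_m = a for odd m
and a_m = b for even m is an (N,Z)-CZCS. -/
theorem stmt12 (N Z M : ℕ) (hM : Even M) (a b : ℕ → ℂ)
    (hC1 : ∀ τ, (1 ≤ τ ∧ τ ≤ Z) ∨ (N - Z ≤ τ ∧ τ ≤ N - 1) →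
      rho N a a τ + rho N b b τ = 0)
    (hC2 : ∀ τ, N - Z ≤ τ → τ ≤ N - 1 → rho N a b τ + rho N b a τ = 0) :
    (∀ τ, (1 ≤ τ ∧ τ ≤ Z) ∨ (N - Z ≤ τ ∧ τ ≤ N - 1) →
      ∑ m ∈ Finset.Icc 1 M, rho N (am a b m) (am a b m) τ = 0) ∧
    (∀ τ, N - Z ≤ τ → τ ≤ N - 1 →
      ∑ m ∈ Finset.Icc 1 M, rho N (am a b m) (am a b (m % M + 1)) τ = 0) := by
  obtain ⟨k, hk⟩ := hM
  have hMk : M = 2 * k := by omega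
  subst hMk
  constructor
  · intro τ hτ
    rw [pair_sum]
    apply Finset.sum_eq_zero
    intro j _
    rw [am_odd, am_even]
    exact hC1 τ hτ
  · intro τ h1 h2
    have hnext : ∀ m ∈ Finset.Icc 1 (2 * k),
        am a b (m % (2 * k) + 1) = am a b (m + 1) := by
      intro m hm
      simp only [Finset.mem_Icc] at hm
      rcases eq_or_lt_of_le hm.2 with h | h
      · subst h
        rw [Nat.mod_self]
        have : (2 * k + 1) % 2 = 1 := by omega
        simp [am, this]
      · rw [Nat.mod_eq_of_lt h]
    rw [Finset.sum_congr rfl (fun m hm => by rw [hnext m hm]), pair_sum]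
    apply Finset.sum_eq_zero
    intro j _
    rw [am_odd, am_even]
    have h3 : (2 : ℕ) * j + 2 + 1 = 2 * (j + 1) + 1 := by ring
    rw [h3, am_odd]
    exact hC2 τ h1 h2
end

section
/- Let (a,b) be a unimodular (N,Z)-CZCP satisfying a_i = b_i and a_{N-1-i} = -b_{N-1-i} for all i ∈ {0,...,Z-1}. Then ρ(b, reverse(b*))(N-τ) + ρ(a, -reverse(a*))(N-τ) = 0 for all τ with 1 ≤ τ ≤ Z. -/
open Finset

/-- For a unimodular (N,Z)-CZCP (a,b) with a_i = b_i and a_{N-1-i} = -b_{N-1-i} for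
all i < Z, we have ρ(b, reverse(b*))(N-τ) + ρ(a, -reverse(a*))(N-τ) = 0 for 1 ≤ τ ≤ Z. -/
theorem stmt13 (N Z : ℕ) (a b : ℕ → ℂ)
    (ha : ∀ n < N, ‖a n‖ = 1) (hb : ∀ n < N, ‖b n‖ = 1)
    (hC1 : ∀ τ, (1 ≤ τ ∧ τ ≤ Z) ∨ (N - Z ≤ τ ∧ τ ≤ N - 1) →
      rho N a a τ + rho N b b τ = 0)
    (hC2 : ∀ τ, N - Z ≤ τ → τ ≤ N - 1 → rho N a b τ + rho N b a τ = 0)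
    (hid : ∀ i < Z, a i = b i ∧ a (N - 1 - i) = -b (N - 1 - i)) :
    ∀ τ, 1 ≤ τ → τ ≤ Z →
      rho N b (fun n => (starRingEnd ℂ) (b (N - 1 - n))) (N - τ)
      + rho N a (fun n => -(starRingEnd ℂ) (a (N - 1 - n))) (N - τ) = 0 := by
  intro τ hτ1 hτZ
  unfold rho
  rw [← Finset.sum_add_distrib]
  apply Finset.sum_eq_zero
  intro n hn
  simp only [Finset.mem_range] at hn
  have hnZ : n < Z := by omega
  have hidxZ : N - 1 - (n + (N - τ)) < Z := by omega
  have e1 := (hid n hnZ).1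
  have e2 := (hid _ hidxZ).1
  simp only [map_neg, Complex.conj_conj, e1, e2]
  ring
end
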